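/- Let v1, v2, v3 be unit vectors in ℝ², linearly independent over ℚ, with γ=(v1,v2), α=(v2,v3), β=(v3,v1). Then v1/(α-βγ) + v2/(β-αγ) + v3/(γ-αβ) = 0. -/

import Mathlib

theorem stmt_13 (v₁ v₂ v₃ : EuclideanSpace ℝ (Fin 2))
    (h1 : ‖v₁‖ = 1) (h2 : ‖v₂‖ = 1) (h3 : ‖v₃‖ = 1)
    (hind : LinearIndependent ℚ ![v₁, v₂, v₃])
    (α β γ : ℝ) (hγ : inner ℝ v₁ v₂ = γ) (hα : inner ℝ v₂ v₃ = α) (hβ : inner ℝ v₃ v₁ = β) :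
    (α - β * γ)⁻¹ • v₁ + (β - α * γ)⁻¹ • v₂ + (γ - α * β)⁻¹ • v₃ = 0 := by
  -- consequence of ℚ-linear independence
  have hQ : ∀ q1 q2 q3 : ℚ, (q1:ℝ) • v₁ + (q2:ℝ) • v₂ + (q3:ℝ) • v₃ = 0 →
      q1 = 0 ∧ q2 = 0 ∧ q3 = 0 := by
    intro q1 q2 q3 h
    have hsmul : ∀ (q:ℚ) (v : EuclideanSpace ℝ (Fin 2)), q • v = (q:ℝ) • v := by
      intro q v
      have := ratCast_smul_eq (E := EuclideanSpace ℝ (Fin 2)) ℚ ℝ q v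
      simpa using this
    have := Fintype.linearIndependent_iff.mp hind ![q1,q2,q3] ?_
    · exact ⟨this 0, this 1, this 2⟩
    · simpa [Fin.sum_univ_three, hsmul] using h
  have ne12 : v₁ ≠ v₂ := by
    intro h
    have := (hQ 1 (-1) 0 (by push_cast; rw [h]; module)).1
    norm_num at this
  have ne12' : v₁ ≠ -v₂ := by
    intro h
    have := (hQ 1 1 0 (by push_cast; rw [h]; module)).1
    norm_num at this
  have ne31 : v₃ ≠ v₁ := by
    intro h
    have := (hQ 1 0 (-1) (by push_cast; rw [h]; module)).1
    norm_num at this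
  have ne31' : v₃ ≠ -v₁ := by
    intro h
    have := (hQ 1 0 1 (by push_cast; rw [h]; module)).1
    norm_num at this
  have ne32 : v₃ ≠ v₂ := by
    intro h
    have := (hQ 0 1 (-1) (by push_cast; rw [h]; module)).2.1
    norm_num at this
  have ne32' : v₃ ≠ -v₂ := by
    intro h
    have := (hQ 0 1 1 (by push_cast; rw [h]; module)).2.1
    norm_num at this
  -- no unit vector is a real multiple of another, non-±-equal one
  have key : ∀ u w : EuclideanSpace ℝ (Fin 2), ‖u‖ = 1 → ‖w‖ = 1 → u ≠ w → u ≠ -w →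
      ∀ a : ℝ, a • w ≠ u := by
    intro u w hu hw hne hne' a ha
    have habs : |a| = 1 := by
      have := congrArg norm ha
      simpa [norm_smul, hw, hu] using this
    rcases (abs_eq (by norm_num : (0:ℝ) ≤ 1)).mp habs with h | h
    · subst h; simp at ha; exact hne ha.symm
    · subst h; apply hne'; rw [← ha]; module
  -- real linear independence of v₁, v₂
  have hli : LinearIndependent ℝ ![v₁, v₂] := by
    rw [linearIndependent_fin2]
    constructor
    · have hv2 : v₂ ≠ 0 := by intro h; rw [h] at h2; simp at h2
      simpa using hv2
    · intro a
      exact key v₁ v₂ h1 h2 ne12 ne12' a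
  have hspan := hli.span_eq_top_of_card_eq_finrank (by simp)
  have hv3 : v₃ ∈ Submodule.span ℝ ({v₁, v₂} : Set (EuclideanSpace ℝ (Fin 2))) := by
    have : Set.range ![v₁, v₂] = {v₁, v₂} := by
      rw [Matrix.range_cons, Matrix.range_cons, Matrix.range_empty]
      simp [Set.pair_comm]
    rw [← this, hspan]; trivial
  obtain ⟨a, b, hab⟩ := Submodule.mem_span_pair.mp hv3
  have ha : a ≠ 0 := by
    intro h
    subst h
    apply key v₃ v₂ h3 h2 ne32 ne32' b
    rw [← hab]; module
  have hb : b ≠ 0 := by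
    intro h
    subst h
    apply key v₃ v₁ h3 h1 ne31 ne31' a
    rw [← hab]; module
  -- γ is strictly between -1 and 1
  have hγlt : γ < 1 := by
    rw [← hγ]
    exact (inner_lt_one_iff_real_of_norm_eq_one h1 h2).mpr ne12
  have hγgt : -γ < 1 := by
    have : (inner ℝ v₁ (-v₂) : ℝ) < 1 :=
      (inner_lt_one_iff_real_of_norm_eq_one h1 (by rw [norm_neg, h2])).mpr ne12'
    rw [inner_neg_right, hγ] at this
    linarith
  have h1γ : (1:ℝ) - γ^2 ≠ 0 := by nlinarith
  -- inner product computations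
  have hγ' : (inner ℝ v₂ v₁ : ℝ) = γ := by rw [real_inner_comm]; exact hγ
  have i11 : (inner ℝ v₁ v₁ : ℝ) = 1 := by
    rw [real_inner_self_eq_norm_sq, h1]; norm_num
  have i22 : (inner ℝ v₂ v₂ : ℝ) = 1 := by
    rw [real_inner_self_eq_norm_sq, h2]; norm_num
  have hβ' : β = a + b * γ := by
    rw [← hβ, ← hab, inner_add_left, real_inner_smul_left, real_inner_smul_left, i11, hγ']
    ring
  have hα' : α = a * γ + b := by
    rw [← hα, ← hab, inner_add_right, real_inner_smul_right, real_inner_smul_right, i22, hγ']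
    ring
  have hnorm : a^2 + b^2 + 2*a*b*γ = 1 := by
    have : (inner ℝ v₃ v₃ : ℝ) = 1 := by
      rw [real_inner_self_eq_norm_sq, h3]; norm_num
    rw [← hab] at this
    simp only [inner_add_left, inner_add_right, real_inner_smul_left, real_inner_smul_right,
      i11, i22, hγ, hγ'] at this
    nlinarith [this]
  -- denominators
  have hd1 : α - β * γ = b * (1 - γ^2) := by rw [hα', hβ']; ring
  have hd2 : β - α * γ = a * (1 - γ^2) := by rw [hα', hβ']; ring
  have hd3 : γ - α * β = -(a * b * (1 - γ^2)) := by
    rw [hα', hβ']; linear_combination (-γ) * hnorm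
  rw [← hab, hd1, hd2, hd3]
  match_scalars
  · field_simp
    ring
  · field_simp
    ring
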